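/- Let X₁,...,X_m and Y₁,...,Y_m be independent random variables, with each Xᵢ, Yᵢ ∈ [0,1], and set Δ = (1/m)Σᵢ(Xᵢ − Yᵢ). If S_X = (1/m)ΣᵢXᵢ − E[X₁] and S_Y = E[Y₁] − (1/m)ΣᵢYᵢ (all Xᵢ i.i.d., all Yᵢ i.i.d., E[X₁]=E[Y₁]), then E[exp((m−1)Δ²)] ≤ E[exp(2(m−1)S_X²)]·E[exp(2(m−1)S_Y²)] ≤ m², using (a+b)² ≤ 2a² + 2b² and Hoeffding tail bounds with the McAllester lemma. -/

import Mathlib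

open MeasureTheory ProbabilityTheory Real

/-- Scalar Hoeffding lemma: for `p ∈ [0,1]`, `1 - p + p e^s ≤ e^{sp + s²/8}`. -/
lemma hoeffding_scalar {p : ℝ} (hp0 : 0 ≤ p) (hp1 : p ≤ 1) (s : ℝ) :
    1 - p + p * exp s ≤ exp (s * p + s ^ 2 / 8) := by
  set D : ℝ → ℝ := fun s => 1 - p + p * exp s with hDdef
  have hD : ∀ s, 0 < D s := by
    intro s
    rcases eq_or_lt_of_le hp0 with h | h
    · simp [hDdef, ← h]
    · have : 0 < p * exp s := mul_pos h (exp_pos s)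
      simp only [hDdef]; nlinarith
  have hDd : ∀ s, HasDerivAt D (p * exp s) s := fun s =>
    ((Real.hasDerivAt_exp s).const_mul p).const_add (1 - p)
  set g : ℝ → ℝ := fun s => s ^ 2 / 8 + s * p - Real.log (D s) with hgdef
  set G : ℝ → ℝ := fun s => s / 4 + p - p * exp s / D s with hGdef
  have hg : ∀ s, HasDerivAt g (G s) s := by
    intro s
    have h1 : HasDerivAt (fun s : ℝ => s ^ 2 / 8 + s * p) (s / 4 + p) s := by
      have := ((hasDerivAt_pow 2 s).div_const 8).add ((hasDerivAt_id s).mul_const p)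
      refine this.congr_deriv ?_
      push_cast; ring
    have h2 : HasDerivAt (fun s => Real.log (D s)) (p * exp s / D s) s :=
      (hDd s).log (hD s).ne'
    exact h1.sub h2
  have hG : ∀ s, HasDerivAt G (1 / 4 - p * exp s * (1 - p) / (D s) ^ 2) s := by
    intro s
    have h1 : HasDerivAt (fun s : ℝ => s / 4 + p) (1 / 4) s := by
      simpa using ((hasDerivAt_id s).div_const 4).add_const p
    have h2 : HasDerivAt (fun s => p * exp s / D s)
        ((p * exp s * D s - p * exp s * (p * exp s)) / (D s) ^ 2) s :=
      ((Real.hasDerivAt_exp s).const_mul p).div (hDd s) (hD s).ne'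
    have := h1.sub h2
    have hnum : p * exp s * (1 - p) = p * exp s * D s - p * exp s * (p * exp s) := by
      simp only [hDdef]; ring
    rw [hnum]
    exact this
  have hG_nonneg : ∀ s, 0 ≤ 1 / 4 - p * exp s * (1 - p) / (D s) ^ 2 := by
    intro s
    have h1 : p * exp s * (1 - p) / (D s) ^ 2 ≤ 1 / 4 := by
      rw [div_le_iff₀ (pow_pos (hD s) 2)]
      have := sq_nonneg ((1 - p) - p * exp s)
      simp only [hDdef]; nlinarith
    linarith
  have hGmono : Monotone G :=
    monotone_of_deriv_nonneg (fun s => (hG s).differentiableAt)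
      (fun s => by rw [(hG s).deriv]; exact hG_nonneg s)
  have hG0 : G 0 = 0 := by simp [hGdef, hDdef]
  have hgdiff : ∀ s, DifferentiableAt ℝ g s := fun s => (hg s).differentiableAt
  have hg0 : g 0 = 0 := by simp [hgdef, hDdef]
  have key : 0 ≤ g s := by
    rcases le_or_gt 0 s with h | h
    · have hmono : MonotoneOn g (Set.Ici (0:ℝ)) := by
        apply monotoneOn_of_deriv_nonneg (convex_Ici 0)
          (Continuous.continuousOn (by
            exact (Differentiable.continuous (fun s => hgdiff s))))
          (fun x _ => (hgdiff x).differentiableWithinAt)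
        intro x hx
        rw [(hg x).deriv]
        have : G 0 ≤ G x := hGmono (le_of_lt (by simpa using hx))
        linarith [hG0 ▸ this]
      have := hmono (Set.self_mem_Ici) (Set.mem_Ici.2 h) h
      linarith [hg0 ▸ this]
    · have hanti : AntitoneOn g (Set.Iic (0:ℝ)) := by
        apply antitoneOn_of_deriv_nonpos (convex_Iic 0)
          (Continuous.continuousOn (by
            exact (Differentiable.continuous (fun s => hgdiff s))))
          (fun x _ => (hgdiff x).differentiableWithinAt)
        intro x hx
        rw [(hg x).deriv]
        have : G x ≤ G 0 := hGmono (le_of_lt (by simpa using hx))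
        linarith [hG0 ▸ this]
      have := hanti (Set.mem_Iic.2 h.le) (Set.self_mem_Iic) h.le
      linarith [hg0 ▸ this]
  have hlog : Real.log (D s) ≤ s * p + s ^ 2 / 8 := by
    simp only [hgdef] at key; linarith
  have := (Real.log_le_iff_le_exp (hD s)).1 hlog
  simpa [hDdef] using this

lemma gauss_eval {b : ℝ} (hb : 0 < b) (c : ℝ) :
    ∫ y : ℝ, exp (-b * y ^ 2 + c * y) = Real.sqrt (π / b) * exp (c ^ 2 / (4 * b)) := by
  have hb' : (-(b : ℂ)).re < 0 := by simpa using hb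
  have h := integral_cexp_quadratic hb' (c : ℂ) 0
  have hL : ∫ x : ℝ, Complex.exp (-(b:ℂ) * x ^ 2 + (c:ℂ) * x + 0)
      = ((∫ y : ℝ, exp (-b * y ^ 2 + c * y) : ℝ) : ℂ) := by
    have he : (fun x : ℝ => Complex.exp (-(b:ℂ) * x ^ 2 + (c:ℂ) * x + 0))
        = fun x : ℝ => ((exp (-b * x ^ 2 + c * x) : ℝ) : ℂ) := by
      funext x
      rw [show (-(b:ℂ) * x ^ 2 + (c:ℂ) * x + 0) = ((-b * x ^ 2 + c * x : ℝ) : ℂ) by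
        push_cast; ring, Complex.ofReal_exp]
    rw [he]
    exact integral_ofReal
  have hR : ((Real.pi : ℂ) / -(-(b:ℂ))) ^ (1 / 2 : ℂ) * Complex.exp (0 - (c:ℂ)^2 / (4 * -(b:ℂ)))
      = ((Real.sqrt (π / b) * exp (c ^ 2 / (4 * b)) : ℝ) : ℂ) := by
    have h1 : ((Real.pi : ℂ) / -(-(b:ℂ))) = ((π / b : ℝ) : ℂ) := by push_cast; ring
    have h2 : ((π / b : ℝ) : ℂ) ^ (1 / 2 : ℂ) = ((Real.sqrt (π / b) : ℝ) : ℂ) := by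
      rw [Real.sqrt_eq_rpow]
      rw [show ((1:ℂ)/2) = ((1/2 : ℝ) : ℂ) by push_cast; ring]
      exact (Complex.ofReal_cpow (by positivity) _).symm
    rw [h1, h2]
    push_cast [Complex.ofReal_exp]
    congr 1
    ring
  rw [hL, hR] at h
  exact_mod_cast h

lemma gauss_integrable {b : ℝ} (hb : 0 < b) (c : ℝ) :
    Integrable (fun y : ℝ => exp (-b * y ^ 2 + c * y)) := by
  have h := (integrable_cexp_quadratic (by simpa using hb : 0 < ((b:ℂ)).re) (c : ℂ) 0).re
  have : (fun x : ℝ => (Complex.exp (-(b:ℂ) * x ^ 2 + (c:ℂ) * x + 0)).re)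
      = fun y : ℝ => exp (-b * y ^ 2 + c * y) := by
    funext x
    rw [show (-(b:ℂ) * x ^ 2 + (c:ℂ) * x + 0) = ((-b * x ^ 2 + c * x : ℝ) : ℂ) by push_cast; ring]
    rw [← Complex.ofReal_exp, Complex.ofReal_re]
  rw [← this]
  exact h

lemma iIndepFun_of_sum_elim_left {Ω : Type*} [MeasurableSpace Ω] {μ : Measure Ω} {m : ℕ}
    {X Y : Fin m → Ω → ℝ}
    (h : iIndepFun (Sum.elim X Y) μ) :
    iIndepFun X μ := by
  classical
  rw [iIndepFun_iff_measure_inter_preimage_eq_mul] at h ⊢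
  intro S sets hsets
  set e : Fin m ↪ (Fin m ⊕ Fin m) := ⟨Sum.inl, Sum.inl_injective⟩
  have := h (S.map e) (sets := Sum.elim sets fun _ => Set.univ) ?_
  · rw [Finset.prod_map] at this
    convert this using 2
    ext ω
    simp [e]
    simp [e]
  · intro i hi
    simp only [Finset.mem_map] at hi
    obtain ⟨j, hj, rfl⟩ := hi
    exact hsets j hj

lemma iIndepFun_of_sum_elim_right {Ω : Type*} [MeasurableSpace Ω] {μ : Measure Ω} {m : ℕ}
    {X Y : Fin m → Ω → ℝ}
    (h : iIndepFun (Sum.elim X Y) μ) :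
    iIndepFun Y μ := by
  classical
  rw [iIndepFun_iff_measure_inter_preimage_eq_mul] at h ⊢
  intro S sets hsets
  set e : Fin m ↪ (Fin m ⊕ Fin m) := ⟨Sum.inr, Sum.inr_injective⟩
  have := h (S.map e) (sets := Sum.elim (fun _ => Set.univ) sets) ?_
  · rw [Finset.prod_map] at this
    convert this using 2
    ext ω
    simp [e]
    simp [e]
  · intro i hi
    simp only [Finset.mem_map] at hi
    obtain ⟨j, hj, rfl⟩ := hi
    exact hsets j hj

/-- mgf bound for a [0,1]-valued variable. -/
lemma mgf_le_of_Icc {Ω : Type*} [MeasurableSpace Ω] {μ : Measure Ω} [IsProbabilityMeasure μ]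
    {W : Ω → ℝ} (hmeas : Measurable W) (hbdd : ∀ ω, W ω ∈ Set.Icc (0:ℝ) 1)
    {p : ℝ} (hp : ∫ ω, W ω ∂μ = p) (s : ℝ) :
    mgf W μ s ≤ exp (s * p + s ^ 2 / 8) := by
  have hWint : Integrable W μ := by
    refine Integrable.mono' (integrable_const 1) hmeas.aestronglyMeasurable ?_
    filter_upwards with ω
    rw [Real.norm_eq_abs, abs_of_nonneg (hbdd ω).1]
    exact (hbdd ω).2
  have hp0 : 0 ≤ p := hp ▸ integral_nonneg fun ω => (hbdd ω).1
  have hp1 : p ≤ 1 := by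
    rw [← hp]
    calc ∫ ω, W ω ∂μ ≤ ∫ _ω, (1:ℝ) ∂μ := integral_mono hWint (integrable_const 1)
          fun ω => (hbdd ω).2
    _ = 1 := by simp
  have hptw : ∀ ω, exp (s * W ω) ≤ 1 - W ω + W ω * exp s := by
    intro ω
    have h := convexOn_exp.2 (Set.mem_univ (0:ℝ)) (Set.mem_univ s)
      (by linarith [(hbdd ω).2] : (0:ℝ) ≤ 1 - W ω) (hbdd ω).1 (by ring)
    simpa [mul_comm] using h
  have hint1 : Integrable (fun ω => exp (s * W ω)) μ := by
    refine Integrable.mono' (integrable_const (exp |s|)) ((hmeas.const_mul s).exp).aestronglyMeasurable ?_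
    filter_upwards with ω
    rw [Real.norm_eq_abs, abs_of_nonneg (exp_nonneg _)]
    apply exp_le_exp.2
    calc s * W ω ≤ |s * W ω| := le_abs_self _
    _ = |s| * |W ω| := abs_mul s _
    _ ≤ |s| * 1 := by
        refine mul_le_mul_of_nonneg_left ?_ (abs_nonneg s)
        rw [abs_of_nonneg (hbdd ω).1]; exact (hbdd ω).2
    _ = |s| := mul_one _
  have hint2 : Integrable (fun ω => 1 - W ω + W ω * exp s) μ :=
    ((integrable_const 1).sub hWint).add (hWint.mul_const _)
  calc mgf W μ s = ∫ ω, exp (s * W ω) ∂μ := rfl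
  _ ≤ ∫ ω, (1 - W ω + W ω * exp s) ∂μ := integral_mono hint1 hint2 hptw
  _ = 1 - p + p * exp s := by
      have h1 := integral_add (μ := μ) (f := fun ω => 1 - W ω) (g := fun ω => W ω * rexp s)
        ((integrable_const 1).sub hWint) (hWint.mul_const _)
      have h2 := integral_sub (μ := μ) (f := fun _ => (1:ℝ)) (g := W)
        (integrable_const 1) hWint
      rw [h1, h2, integral_mul_const, hp]
      simp
  _ ≤ exp (s * p + s ^ 2 / 8) := hoeffding_scalar hp0 hp1 s

/-- McAllester-style moment bound via the Gaussian trick. -/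
lemma factor_bound {Ω : Type*} [MeasurableSpace Ω] (μ : Measure Ω) [IsProbabilityMeasure μ]
    {m : ℕ} (hm : 1 ≤ m) (W : Fin m → Ω → ℝ) (hmeas : ∀ i, Measurable (W i))
    (hindep : iIndepFun W μ)
    (hbdd : ∀ i ω, W i ω ∈ Set.Icc (0:ℝ) 1) (E : ℝ) (hE : ∀ i, ∫ ω, W i ω ∂μ = E) :
    ∫ ω, exp (2 * ((m:ℝ) - 1) * ((1 / (m:ℝ)) * (∑ i : Fin m, W i ω) - E) ^ 2) ∂μ
      ≤ Real.sqrt m := by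
  have hM : (0:ℝ) < m := by exact_mod_cast hm
  have hM1 : (1:ℝ) ≤ m := by exact_mod_cast hm
  set M : ℝ := (m : ℝ) with hMdef
  set S : Ω → ℝ := fun ω => (1 / M) * (∑ i : Fin m, W i ω) - E with hSdef
  have hSmeas : Measurable S := by
    apply Measurable.sub ?_ measurable_const
    exact (Finset.measurable_sum Finset.univ fun i _ => hmeas i).const_mul _
  -- bounds on E and S
  have hE0 : 0 ≤ E := (hE ⟨0, hm⟩) ▸ integral_nonneg fun ω => (hbdd _ ω).1
  have hE1 : E ≤ 1 := by
    rw [← hE ⟨0, hm⟩]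
    calc ∫ ω, W ⟨0, hm⟩ ω ∂μ ≤ ∫ _ω, (1:ℝ) ∂μ := by
          refine integral_mono ?_ (integrable_const 1) fun ω => (hbdd _ ω).2
          refine Integrable.mono' (integrable_const 1) (hmeas _).aestronglyMeasurable ?_
          filter_upwards with ω
          rw [Real.norm_eq_abs, abs_of_nonneg (hbdd _ ω).1]; exact (hbdd _ ω).2
    _ = 1 := by simp
  have hSbd : ∀ ω, S ω ^ 2 ≤ 1 := by
    intro ω
    have h1 : 0 ≤ ∑ i : Fin m, W i ω := Finset.sum_nonneg fun i _ => (hbdd i ω).1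
    have h2 : ∑ i : Fin m, W i ω ≤ M := by
      calc ∑ i : Fin m, W i ω ≤ Finset.univ.card • (1:ℝ) :=
            Finset.sum_le_card_nsmul _ _ 1 fun i _ => (hbdd i ω).2
      _ = M := by simp [hMdef]
    have h3 : (1 / M) * (∑ i : Fin m, W i ω) ≤ 1 := by
      rw [div_mul_eq_mul_div, one_mul, div_le_one hM]; exact h2
    have h4 : 0 ≤ (1 / M) * (∑ i : Fin m, W i ω) := by positivity
    have : -1 ≤ S ω ∧ S ω ≤ 1 := ⟨by simp only [hSdef]; linarith, by simp only [hSdef]; linarith⟩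
    nlinarith [this.1, this.2]
  -- mgf bound
  have hmgf : ∀ s : ℝ, ∫ ω, exp (s * S ω) ∂μ ≤ exp (s ^ 2 / (8 * M)) := by
    intro s
    have hsplit : ∀ ω, exp (s * S ω) = exp (-(s * E)) * exp ((s / M) * (∑ i : Fin m, W i) ω) := by
      intro ω
      rw [← Real.exp_add]
      congr 1
      simp only [hSdef, Finset.sum_apply]
      field_simp
      ring
    calc ∫ ω, exp (s * S ω) ∂μ
        = exp (-(s * E)) * ∫ ω, exp ((s / M) * (∑ i : Fin m, W i) ω) ∂μ := by
          rw [← integral_const_mul]; exact integral_congr_ae (Filter.Eventually.of_forall hsplit)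
    _ = exp (-(s * E)) * ∏ i : Fin m, mgf (W i) μ (s / M) := by
          rw [← hindep.mgf_sum hmeas Finset.univ]; rfl
    _ ≤ exp (-(s * E)) * ∏ i : Fin m, exp ((s / M) * E + (s / M) ^ 2 / 8) := by
          refine mul_le_mul_of_nonneg_left ?_ (exp_nonneg _)
          exact Finset.prod_le_prod (fun i _ => mgf_nonneg)
            (fun i _ => mgf_le_of_Icc (hmeas i) (hbdd i) (hE i) (s / M))
    _ = exp (s ^ 2 / (8 * M)) := by
          rw [Finset.prod_const, ← Real.exp_nat_mul, ← Real.exp_add]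
          congr 1
          simp only [Finset.card_univ, Fintype.card_fin, ← hMdef]
          field_simp
          ring
  -- Gaussian representation
  set a : ℝ := Real.sqrt (4 * (M - 1)) with hadef
  have ha2 : a ^ 2 = 4 * (M - 1) := Real.sq_sqrt (by linarith)
  have hπ : (0:ℝ) < Real.sqrt (2 * π) := Real.sqrt_pos.2 (by positivity)
  have hrep : ∀ ω, exp (2 * (M - 1) * (S ω) ^ 2)
      = (Real.sqrt (2 * π))⁻¹ * ∫ y : ℝ, exp (-(1/2) * y ^ 2 + (a * S ω) * y) := by
    intro ω
    rw [gauss_eval (by norm_num : (0:ℝ) < 1/2) (a * S ω)]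
    rw [show π / (1/2 : ℝ) = 2 * π by ring]
    rw [show (a * S ω) ^ 2 / (4 * (1/2 : ℝ)) = a ^ 2 * S ω ^ 2 / 2 by ring, ha2]
    rw [← mul_assoc, inv_mul_cancel₀ hπ.ne', one_mul]
    congr 1
    ring
  -- Fubini
  have hFmeas : Measurable (fun z : Ω × ℝ => exp (-(1/2) * z.2 ^ 2 + (a * S z.1) * z.2)) := by
    apply Measurable.exp
    exact ((measurable_snd.pow_const 2).const_mul _).add
      (((hSmeas.comp measurable_fst).const_mul a).mul measurable_snd)
  have hF_int : Integrable (fun z : Ω × ℝ => exp (-(1/2) * z.2 ^ 2 + (a * S z.1) * z.2))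
      (μ.prod volume) := by
    rw [integrable_prod_iff hFmeas.aestronglyMeasurable]
    constructor
    · filter_upwards with ω
      exact gauss_integrable (by norm_num) (a * S ω)
    · have heq : (fun ω => ∫ y : ℝ, ‖exp (-(1/2) * y ^ 2 + (a * S ω) * y)‖)
          = fun ω => Real.sqrt (2 * π) * exp ((a * S ω) ^ 2 / 2) := by
        funext ω
        simp_rw [Real.norm_of_nonneg (exp_nonneg _)]
        rw [gauss_eval (by norm_num : (0:ℝ) < 1/2) (a * S ω)]
        rw [show π / (1/2 : ℝ) = 2 * π by ring]
        congr 2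
        ring
      rw [heq]
      refine Integrable.mono' (integrable_const (Real.sqrt (2 * π) * exp (a ^ 2 / 2)))
        ?_ ?_
      · exact (((((hSmeas.const_mul a).pow_const 2).div_const 2).exp).const_mul _).aestronglyMeasurable
      · filter_upwards with ω
        rw [Real.norm_of_nonneg (by positivity)]
        refine mul_le_mul_of_nonneg_left (exp_le_exp.2 ?_) (Real.sqrt_nonneg _)
        rw [mul_pow]
        have h := mul_le_mul_of_nonneg_left (hSbd ω) (sq_nonneg a)
        rw [mul_one] at h
        exact div_le_div_of_nonneg_right h (by norm_num)

  -- main computation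
  have hβ : (0:ℝ) < 1 / (2 * M) := by positivity
  calc ∫ ω, exp (2 * (M - 1) * ((1 / M) * (∑ i : Fin m, W i ω) - E) ^ 2) ∂μ
      = ∫ ω, ((Real.sqrt (2 * π))⁻¹ *
          ∫ y : ℝ, exp (-(1/2) * y ^ 2 + (a * S ω) * y)) ∂μ := by
        exact integral_congr_ae (Filter.Eventually.of_forall fun ω => hrep ω)
  _ = (Real.sqrt (2 * π))⁻¹ *
        ∫ ω, (∫ y : ℝ, exp (-(1/2) * y ^ 2 + (a * S ω) * y)) ∂μ := integral_const_mul _ _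
  _ = (Real.sqrt (2 * π))⁻¹ *
        ∫ y : ℝ, (∫ ω, exp (-(1/2) * y ^ 2 + (a * S ω) * y) ∂μ) := by
        rw [integral_integral_swap hF_int]
  _ ≤ (Real.sqrt (2 * π))⁻¹ * ∫ y : ℝ, exp (-(1 / (2 * M)) * y ^ 2 + 0 * y) := by
        refine mul_le_mul_of_nonneg_left ?_ (by positivity)
        refine integral_mono_of_nonneg ?_ (gauss_integrable hβ 0) ?_
        · filter_upwards with y
          exact integral_nonneg fun ω => exp_nonneg _
        · filter_upwards with y
          have h1 : ∀ ω, exp (-(1/2) * y ^ 2 + (a * S ω) * y)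
              = exp (-(1/2) * y ^ 2) * exp ((a * y) * S ω) := by
            intro ω; rw [← Real.exp_add]; congr 1; ring
          calc ∫ ω, exp (-(1/2) * y ^ 2 + (a * S ω) * y) ∂μ
              = exp (-(1/2) * y ^ 2) * ∫ ω, exp ((a * y) * S ω) ∂μ := by
                rw [← integral_const_mul]
                exact integral_congr_ae (Filter.Eventually.of_forall h1)
          _ ≤ exp (-(1/2) * y ^ 2) * exp ((a * y) ^ 2 / (8 * M)) :=
                mul_le_mul_of_nonneg_left (hmgf (a * y)) (exp_nonneg _)
          _ = exp (-(1 / (2 * M)) * y ^ 2 + 0 * y) := by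
                rw [← Real.exp_add]
                congr 1
                rw [mul_pow, ha2]
                field_simp
                ring
  _ = (Real.sqrt (2 * π))⁻¹ * (Real.sqrt (π / (1 / (2 * M))) * exp (0 ^ 2 / (4 * (1 / (2 * M))))) := by
        rw [gauss_eval hβ 0]
  _ = Real.sqrt M := by
        rw [show π / (1 / (2 * M)) = (2 * π) * M by field_simp]
        rw [Real.sqrt_mul (by positivity) M]
        rw [show (0:ℝ) ^ 2 / (4 * (1 / (2 * M))) = 0 by simp]
        rw [Real.exp_zero, mul_one, ← mul_assoc, inv_mul_cancel₀ hπ.ne', one_mul]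

lemma integrable_exp_of_le {Ω : Type*} [MeasurableSpace Ω] {μ : Measure Ω} [IsFiniteMeasure μ]
    {h : Ω → ℝ} (hmeas : Measurable h) {C : ℝ} (hb : ∀ ω, h ω ≤ C) :
    Integrable (fun ω => exp (h ω)) μ := by
  refine Integrable.mono' (integrable_const (exp C)) (hmeas.exp).aestronglyMeasurable ?_
  filter_upwards with ω
  rw [Real.norm_of_nonneg (exp_nonneg _)]
  exact exp_le_exp.2 (hb ω)

lemma mean_bounds {Ω : Type*} [MeasurableSpace Ω] {μ : Measure Ω} [IsProbabilityMeasure μ]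
    {W : Ω → ℝ} (hmeas : Measurable W) (hbdd : ∀ ω, W ω ∈ Set.Icc (0:ℝ) 1) :
    (∫ ω, W ω ∂μ) ∈ Set.Icc (0:ℝ) 1 := by
  have hWint : Integrable W μ := by
    refine Integrable.mono' (integrable_const 1) hmeas.aestronglyMeasurable ?_
    filter_upwards with ω
    rw [Real.norm_eq_abs, abs_of_nonneg (hbdd ω).1]
    exact (hbdd ω).2
  constructor
  · exact integral_nonneg fun ω => (hbdd ω).1
  · calc ∫ ω, W ω ∂μ ≤ ∫ _ω, (1:ℝ) ∂μ :=
          integral_mono hWint (integrable_const 1) (fun ω => (hbdd ω).2)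
    _ = 1 := by simp

lemma mean_dev_bounds {Ω : Type*} [MeasurableSpace Ω] {m : ℕ} (hm : 1 ≤ m)
    (W : Fin m → Ω → ℝ) (hbdd : ∀ i ω, W i ω ∈ Set.Icc (0:ℝ) 1)
    {E : ℝ} (hE0 : 0 ≤ E) (hE1 : E ≤ 1) (ω : Ω) :
    ((1 / (m:ℝ)) * (∑ i : Fin m, W i ω) - E) ^ 2 ≤ 1 := by
  have hM : (0:ℝ) < m := by exact_mod_cast hm
  have h1 : 0 ≤ ∑ i : Fin m, W i ω := Finset.sum_nonneg fun i _ => (hbdd i ω).1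
  have h2 : ∑ i : Fin m, W i ω ≤ (m:ℝ) := by
    calc ∑ i : Fin m, W i ω ≤ Finset.univ.card • (1:ℝ) :=
          Finset.sum_le_card_nsmul _ _ 1 fun i _ => (hbdd i ω).2
    _ = (m:ℝ) := by simp
  have h3 : (1 / (m:ℝ)) * (∑ i : Fin m, W i ω) ≤ 1 := by
    rw [div_mul_eq_mul_div, one_mul, div_le_one hM]; exact h2
  have h4 : 0 ≤ (1 / (m:ℝ)) * (∑ i : Fin m, W i ω) := by positivity
  nlinarith


/-- Key moment bound in the PAC-Bayes-style proof: for two jointly independent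
i.i.d. samples of `[0,1]`-valued variables with the same mean, with
`Δ = (1/m)Σ(Xᵢ−Yᵢ)`, `S_X = (1/m)ΣXᵢ − E[X]`, `S_Y = E[Y] − (1/m)ΣYᵢ`, we have
`E[exp((m−1)Δ²)] ≤ E[exp(2(m−1)S_X²)]·E[exp(2(m−1)S_Y²)] ≤ m²`. -/
theorem stmt_18 {Ω : Type*} [MeasurableSpace Ω] (μ : Measure Ω) [IsProbabilityMeasure μ]
    (m : ℕ) (hm : 1 ≤ m) (X Y : Fin m → Ω → ℝ)
    (hmeasX : ∀ i, Measurable (X i)) (hmeasY : ∀ i, Measurable (Y i))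
    (hindep : iIndepFun (Sum.elim X Y) μ)
    (hXbdd : ∀ i ω, X i ω ∈ Set.Icc (0 : ℝ) 1) (hYbdd : ∀ i ω, Y i ω ∈ Set.Icc (0 : ℝ) 1)
    (hXid : ∀ i j, IdentDistrib (X i) (X j) μ μ)
    (hYid : ∀ i j, IdentDistrib (Y i) (Y j) μ μ)
    (EX EY : ℝ) (hEX : ∀ i, ∫ ω, X i ω ∂μ = EX) (hEY : ∀ i, ∫ ω, Y i ω ∂μ = EY)
    (hmeans : EX = EY) :
    (∫ ω, Real.exp (((m : ℝ) - 1) *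
        ((1 / (m : ℝ)) * ∑ i : Fin m, (X i ω - Y i ω)) ^ 2) ∂μ)
      ≤ (∫ ω, Real.exp (2 * ((m : ℝ) - 1) *
            ((1 / (m : ℝ)) * (∑ i : Fin m, X i ω) - EX) ^ 2) ∂μ)
        * (∫ ω, Real.exp (2 * ((m : ℝ) - 1) *
            (EY - (1 / (m : ℝ)) * (∑ i : Fin m, Y i ω)) ^ 2) ∂μ) ∧
    (∫ ω, Real.exp (2 * ((m : ℝ) - 1) *
            ((1 / (m : ℝ)) * (∑ i : Fin m, X i ω) - EX) ^ 2) ∂μ)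
        * (∫ ω, Real.exp (2 * ((m : ℝ) - 1) *
            (EY - (1 / (m : ℝ)) * (∑ i : Fin m, Y i ω)) ^ 2) ∂μ)
      ≤ (m : ℝ) ^ 2 := by
    classical
  have hM : (0:ℝ) < m := by exact_mod_cast hm
  have hM1 : (1:ℝ) ≤ m := by exact_mod_cast hm
  set M : ℝ := (m : ℝ) with hMdef
  -- mean bounds
  have hEXmem := (hEX ⟨0, hm⟩) ▸ mean_bounds (hmeasX ⟨0, hm⟩) (hXbdd ⟨0, hm⟩)
  have hEYmem := (hEY ⟨0, hm⟩) ▸ mean_bounds (hmeasY ⟨0, hm⟩) (hYbdd ⟨0, hm⟩)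
  set SX : Ω → ℝ := fun ω => (1 / M) * (∑ i : Fin m, X i ω) - EX with hSXdef
  set SY : Ω → ℝ := fun ω => EY - (1 / M) * (∑ i : Fin m, Y i ω) with hSYdef
  have hSXsq : ∀ ω, SX ω ^ 2 ≤ 1 := fun ω =>
    mean_dev_bounds hm X hXbdd hEXmem.1 hEXmem.2 ω
  have hSYsq : ∀ ω, SY ω ^ 2 ≤ 1 := by
    intro ω
    have := mean_dev_bounds hm Y hYbdd hEYmem.1 hEYmem.2 ω
    calc SY ω ^ 2 = ((1 / M) * (∑ i : Fin m, Y i ω) - EY) ^ 2 := by ring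
    _ ≤ 1 := this
  have hSXmeas : Measurable SX :=
    ((Finset.measurable_sum Finset.univ fun i _ => hmeasX i).const_mul _).sub measurable_const
  have hSYmeas : Measurable SY :=
    Measurable.sub measurable_const
      ((Finset.measurable_sum Finset.univ fun i _ => hmeasY i).const_mul _)
  set fX : Ω → ℝ := fun ω => exp (2 * (M - 1) * SX ω ^ 2) with hfXdef
  set fY : Ω → ℝ := fun ω => exp (2 * (M - 1) * SY ω ^ 2) with hfYdef
  have hfXmeas : Measurable fX := (((hSXmeas.pow_const 2).const_mul _).exp)
  have hfYmeas : Measurable fY := (((hSYmeas.pow_const 2).const_mul _).exp)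
  have hfXint : Integrable fX μ :=
    integrable_exp_of_le ((hSXmeas.pow_const 2).const_mul _) (C := 2 * (M - 1))
      (fun ω => by nlinarith [hSXsq ω, hM1])
  have hfYint : Integrable fY μ :=
    integrable_exp_of_le ((hSYmeas.pow_const 2).const_mul _) (C := 2 * (M - 1))
      (fun ω => by nlinarith [hSYsq ω, hM1])
  -- pointwise bound
  have hpt : ∀ ω, exp ((M - 1) * ((1 / M) * ∑ i : Fin m, (X i ω - Y i ω)) ^ 2)
      ≤ fX ω * fY ω := by
    intro ω
    have hdelta : (1 / M) * ∑ i : Fin m, (X i ω - Y i ω) = SX ω + SY ω := by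
      rw [Finset.sum_sub_distrib]
      simp only [hSXdef, hSYdef]
      rw [hmeans]
      ring
    rw [hdelta, ← Real.exp_add]
    apply exp_le_exp.2
    nlinarith [sq_nonneg (SX ω - SY ω), hM1]
  -- independence of fX and fY
  have hmeasElim : ∀ i : Fin m ⊕ Fin m, Measurable (Sum.elim X Y i) := by
    rintro (i | i) <;> simpa using (by first | exact hmeasX i | exact hmeasY i)
  set Sl : Finset (Fin m ⊕ Fin m) := Finset.univ.map ⟨Sum.inl, Sum.inl_injective⟩ with hSl
  set Sr : Finset (Fin m ⊕ Fin m) := Finset.univ.map ⟨Sum.inr, Sum.inr_injective⟩ with hSr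
  have hdisj : Disjoint Sl Sr := by
    rw [Finset.disjoint_left]
    rintro x hx hy
    simp only [hSl, hSr, Finset.mem_map, Finset.mem_univ, Function.Embedding.coeFn_mk,
      true_and] at hx hy
    obtain ⟨j, rfl⟩ := hx
    obtain ⟨k, hk⟩ := hy
    simp at hk
  have hbase := hindep.indepFun_finset Sl Sr hdisj hmeasElim
  have hmemSl : ∀ j : Fin m, Sum.inl j ∈ Sl := fun j => by simp [hSl]
  have hmemSr : ∀ j : Fin m, Sum.inr j ∈ Sr := fun j => by simp [hSr]
  set φX : ({ x // x ∈ Sl } → ℝ) → ℝ := fun v =>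
    exp (2 * (M - 1) * ((1 / M) * (∑ j : Fin m, v ⟨Sum.inl j, hmemSl j⟩) - EX) ^ 2) with hφX
  set φY : ({ x // x ∈ Sr } → ℝ) → ℝ := fun v =>
    exp (2 * (M - 1) * (EY - (1 / M) * (∑ j : Fin m, v ⟨Sum.inr j, hmemSr j⟩)) ^ 2) with hφY
  have hφXmeas : Measurable φX := by
    apply Measurable.exp
    apply Measurable.const_mul
    apply Measurable.pow_const
    exact ((Finset.measurable_sum Finset.univ (fun j _ =>
      measurable_pi_apply (⟨Sum.inl j, hmemSl j⟩ : { x // x ∈ Sl }))).const_mul (1/M)).sub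
      measurable_const
  have hφYmeas : Measurable φY := by
    apply Measurable.exp
    apply Measurable.const_mul
    apply Measurable.pow_const
    exact Measurable.sub measurable_const
      ((Finset.measurable_sum Finset.univ (fun j _ =>
        measurable_pi_apply (⟨Sum.inr j, hmemSr j⟩ : { x // x ∈ Sr }))).const_mul (1/M))
  have hindepXY : IndepFun fX fY μ := by
    have h := hbase.comp hφXmeas hφYmeas
    have hX : (φX ∘ fun a (i : { x // x ∈ Sl }) => Sum.elim X Y i a) = fX := by
      funext ω; rfl
    have hY : (φY ∘ fun a (i : { x // x ∈ Sr }) => Sum.elim X Y i a) = fY := by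
      funext ω; rfl
    rwa [hX, hY] at h
  -- part 1
  have hLHSint : Integrable
      (fun ω => exp ((M - 1) * ((1 / M) * ∑ i : Fin m, (X i ω - Y i ω)) ^ 2)) μ := by
    refine integrable_exp_of_le ?_ (C := 4 * (M - 1)) ?_
    · exact Measurable.const_mul
        (((Finset.measurable_sum Finset.univ fun i _ =>
          (hmeasX i).sub (hmeasY i)).const_mul _).pow_const 2) _
    · intro ω
      have hdelta : (1 / M) * ∑ i : Fin m, (X i ω - Y i ω) = SX ω + SY ω := by
        rw [Finset.sum_sub_distrib]
        simp only [hSXdef, hSYdef]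
        rw [hmeans]
        ring
      rw [hdelta]
      nlinarith [hSXsq ω, hSYsq ω, hM1, sq_nonneg (SX ω - SY ω)]
  have hprodint : Integrable (fun ω => fX ω * fY ω) μ := by
    have : (fun ω => fX ω * fY ω)
        = fun ω => exp (2 * (M - 1) * SX ω ^ 2 + 2 * (M - 1) * SY ω ^ 2) := by
      funext ω; rw [Real.exp_add]
    rw [this]
    refine integrable_exp_of_le ?_ (C := 4 * (M - 1)) ?_
    · exact ((hSXmeas.pow_const 2).const_mul _).add ((hSYmeas.pow_const 2).const_mul _)
    · intro ω
      nlinarith [hSXsq ω, hSYsq ω, hM1]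
  have hpart1 : (∫ ω, exp ((M - 1) * ((1 / M) * ∑ i : Fin m, (X i ω - Y i ω)) ^ 2) ∂μ)
      ≤ (∫ ω, fX ω ∂μ) * ∫ ω, fY ω ∂μ := by
    calc (∫ ω, exp ((M - 1) * ((1 / M) * ∑ i : Fin m, (X i ω - Y i ω)) ^ 2) ∂μ)
        ≤ ∫ ω, fX ω * fY ω ∂μ := integral_mono hLHSint hprodint hpt
    _ = (∫ ω, fX ω ∂μ) * ∫ ω, fY ω ∂μ :=
        hindepXY.integral_mul_eq_mul_integral hfXint.aestronglyMeasurable hfYint.aestronglyMeasurable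
  -- part 2
  have hXfac : (∫ ω, fX ω ∂μ) ≤ Real.sqrt M :=
    factor_bound μ hm X hmeasX (iIndepFun_of_sum_elim_left hindep) hXbdd EX hEX
  have hYfac : (∫ ω, fY ω ∂μ) ≤ Real.sqrt M := by
    have heq : (∫ ω, fY ω ∂μ)
        = ∫ ω, exp (2 * (M - 1) * ((1 / M) * (∑ i : Fin m, Y i ω) - EY) ^ 2) ∂μ := by
      refine integral_congr_ae (Filter.Eventually.of_forall fun ω => ?_)
      simp only [hfYdef, hSYdef]
      congr 1
      ring
    rw [heq]
    exact factor_bound μ hm Y hmeasY (iIndepFun_of_sum_elim_right hindep) hYbdd EY hEY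
  have hXnn : 0 ≤ ∫ ω, fX ω ∂μ := integral_nonneg fun ω => exp_nonneg _
  have hYnn : 0 ≤ ∫ ω, fY ω ∂μ := integral_nonneg fun ω => exp_nonneg _
  have hpart2 : (∫ ω, fX ω ∂μ) * (∫ ω, fY ω ∂μ) ≤ M ^ 2 := by
    calc (∫ ω, fX ω ∂μ) * (∫ ω, fY ω ∂μ) ≤ Real.sqrt M * Real.sqrt M :=
          mul_le_mul hXfac hYfac hYnn (Real.sqrt_nonneg M)
    _ = M := Real.mul_self_sqrt hM.le
    _ ≤ M ^ 2 := by nlinarith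
  exact ⟨hpart1, hpart2⟩
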